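/- Let o ∈ [0,1]^d, z its rounding, p ≥ 1, and let S, T ⊆ {1,…,d} with |S| = |T| and suppose there is a bijection φ: S → T with |o^{φ(i)} − 0.5| ≤ |o^i − 0.5| for all i ∈ S. Then ‖o − flip(z,T)‖_p ≤ ‖o − flip(z,S)‖_p. -/

import Mathlib

noncomputable def lpN {d : ℕ} (p : ℝ) (v : Fin d → ℝ) : ℝ :=
  (∑ k, |v k| ^ p) ^ (1 / p)

noncomputable def rnd {d : ℕ} (o : Fin d → ℝ) : Fin d → ℝ :=
  fun k => if (0.5 : ℝ) ≤ o k then 1 else 0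

noncomputable def flipSet {d : ℕ} (z : Fin d → ℝ) (S : Finset (Fin d)) : Fin d → ℝ :=
  fun k => if k ∈ S then 1 - z k else z k

lemma keyAbs {d : ℕ} (o : Fin d → ℝ) (ho : ∀ k, o k ∈ Set.Icc (0 : ℝ) 1)
    (U : Finset (Fin d)) (k : Fin d) :
    |o k - flipSet (rnd o) U k| =
      if k ∈ U then 0.5 + |o k - 0.5| else 0.5 - |o k - 0.5| := by
  obtain ⟨h0, h1⟩ := ho k
  unfold flipSet rnd
  by_cases hU : k ∈ U <;> by_cases hh : (0.5 : ℝ) ≤ o k <;>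
      simp only [hU, hh, if_true, if_false]
  · rw [abs_of_nonneg (by linarith), abs_of_nonneg (by linarith)]; ring_nf
  · rw [abs_of_nonpos (by linarith), abs_of_nonpos (by linarith)]; ring_nf
  · rw [abs_of_nonpos (by linarith), abs_of_nonneg (by linarith)]; ring_nf
  · rw [abs_of_nonneg (by linarith), abs_of_nonpos (by linarith)]; ring_nf

theorem stmt8 {d : ℕ} (hd : 1 ≤ d) (p : ℝ) (hp : 1 ≤ p)
    (o : Fin d → ℝ) (ho : ∀ k, o k ∈ Set.Icc (0 : ℝ) 1)
    (S T : Finset (Fin d)) (hcard : S.card = T.card)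
    (φ : Fin d → Fin d) (hφ : Set.BijOn φ ↑S ↑T)
    (hle : ∀ i ∈ S, |o (φ i) - 0.5| ≤ |o i - 0.5|) :
    lpN p (fun k => o k - flipSet (rnd o) T k) ≤
      lpN p (fun k => o k - flipSet (rnd o) S k) := by
  have hp0 : (0:ℝ) ≤ p := by linarith
  set c : Fin d → ℝ := fun k => |o k - 0.5| with hc
  have hc0 : ∀ k, 0 ≤ c k := fun k => abs_nonneg _
  have hc5 : ∀ k, c k ≤ 0.5 := by
    intro k; obtain ⟨h0, h1⟩ := ho k
    rw [hc]; rw [abs_le]; constructor <;> linarith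
  have hsum : ∀ U : Finset (Fin d),
      ∑ k, |o k - flipSet (rnd o) U k| ^ p
        = ∑ k, (0.5 - c k) ^ p + ∑ k ∈ U, ((0.5 + c k) ^ p - (0.5 - c k) ^ p) := by
    intro U
    have : ∀ k, |o k - flipSet (rnd o) U k| ^ p
        = (0.5 - c k) ^ p + (if k ∈ U then (0.5 + c k) ^ p - (0.5 - c k) ^ p else 0) := by
      intro k
      rw [keyAbs o ho U k]
      by_cases hU : k ∈ U <;> simp [hU] <;> rfl
    simp_rw [this]
    rw [Finset.sum_add_distrib, Finset.sum_ite_mem, Finset.univ_inter]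
  have hST : ∑ k ∈ T, ((0.5 + c k) ^ p - (0.5 - c k) ^ p)
      ≤ ∑ k ∈ S, ((0.5 + c k) ^ p - (0.5 - c k) ^ p) := by
    have himg : S.image φ = T := by
      apply Finset.coe_injective
      rw [Finset.coe_image, hφ.image_eq]
    rw [← himg, Finset.sum_image (fun x hx y hy h => hφ.injOn (by simpa using hx) (by simpa using hy) h)]
    apply Finset.sum_le_sum
    intro i hi
    have h1 : c (φ i) ≤ c i := hle i hi
    have h2 : (0.5 + c (φ i)) ^ p ≤ (0.5 + c i) ^ p :=
      Real.rpow_le_rpow (by have := hc0 (φ i); linarith) (by linarith) hp0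
    have h3 : (0.5 - c i) ^ p ≤ (0.5 - c (φ i)) ^ p :=
      Real.rpow_le_rpow (by have := hc5 i; linarith) (by linarith) hp0
    linarith
  unfold lpN
  apply Real.rpow_le_rpow
  · exact Finset.sum_nonneg fun k _ => Real.rpow_nonneg (abs_nonneg _) p
  · rw [hsum S, hsum T]; linarith
  · positivity
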